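/- (Lemma 1: structural identities for M^∘.) A process M belongs to M^∘ if and only if M is an adapted martingale with M_0 = 0 such that almost surely: (i) max_{τ^{l−1} < r ≤ τ^l} (Z_r − M_r) = Z_{τ^l} − M_{τ^l} for every l ≥ 1, and (ii) max_{τ^{l−1} ≤ r ≤ τ^l} (Z_r − M_r) = Z_{τ^{l−1}} − M_{τ^{l−1}} for every l > 1. -/

import Mathlib

open MeasureTheory Finset

/-- The discrete interval `{r : ℕ | τ^{l−1} < r ≤ τ^l} ∩ {0,…,J}` (the family `τ^l` of
successive optimal exercise dates is `ℤ`-valued, with the convention `τ^0 = −1`). -/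
def itvIoc {Ω : Type*} (J : ℕ) (τ : ℕ → Ω → ℤ) (l : ℕ) (ω : Ω) : Finset ℕ :=
  (Finset.Icc 0 J).filter (fun r => τ (l - 1) ω < (r : ℤ) ∧ (r : ℤ) ≤ τ l ω)

/-- The discrete interval `{r : ℕ | τ^{l−1} ≤ r ≤ τ^l} ∩ {0,…,J}`. -/
def itvIcc {Ω : Type*} (J : ℕ) (τ : ℕ → Ω → ℤ) (l : ℕ) (ω : Ω) : Finset ℕ :=
  (Finset.Icc 0 J).filter (fun r => τ (l - 1) ω ≤ (r : ℤ) ∧ (r : ℤ) ≤ τ l ω)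

lemma mem_itvIoc' {Ω : Type*} {J : ℕ} {τ : ℕ → Ω → ℤ} {l r : ℕ} {ω : Ω}
    (hτl : τ l ω ≤ (J : ℤ)) :
    r ∈ itvIoc J τ l ω ↔ τ (l - 1) ω < (r : ℤ) ∧ (r : ℤ) ≤ τ l ω := by
  simp only [itvIoc, Finset.mem_filter, Finset.mem_Icc, Nat.zero_le, true_and]
  exact ⟨fun h => h.2, fun h => ⟨by exact_mod_cast h.2.trans hτl, h⟩⟩

lemma mem_itvIcc' {Ω : Type*} {J : ℕ} {τ : ℕ → Ω → ℤ} {l r : ℕ} {ω : Ω}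
    (hτl : τ l ω ≤ (J : ℤ)) :
    r ∈ itvIcc J τ l ω ↔ τ (l - 1) ω ≤ (r : ℤ) ∧ (r : ℤ) ≤ τ l ω := by
  simp only [itvIcc, Finset.mem_filter, Finset.mem_Icc, Nat.zero_le, true_and]
  exact ⟨fun h => h.2, fun h => ⟨by exact_mod_cast h.2.trans hτl, h⟩⟩

lemma pathwise {Ω : Type*} (J : ℕ) (τ : ℕ → Ω → ℤ) (ω : Ω) (L : ℕ)
    (f Zf Cf : ℕ → ℝ) (σ : ℕ → ℕ)
    (hτ0 : τ 0 ω = -1) (hL1 : 1 ≤ L) (hτlast : τ L ω = (J : ℤ))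
    (hmono : ∀ l, 1 ≤ l → l ≤ L → τ (l - 1) ω < τ l ω)
    (hrange : ∀ l, 1 ≤ l → l ≤ L → 0 ≤ τ l ω ∧ τ l ω ≤ (J : ℤ))
    (hstop : ∀ l, 1 ≤ l → l ≤ L → Cf (τ l ω).toNat ≤ Zf (τ l ω).toNat)
    (hmin : ∀ l, 1 ≤ l → l ≤ L → ∀ i : ℕ, τ (l - 1) ω < (i : ℤ) → (i : ℤ) < τ l ω →
      Zf i < Cf i)
    (hσ1 : ∀ j, j ≤ J → j ≤ σ j ∧ σ j ≤ J ∧ Cf (σ j) ≤ Zf (σ j))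
    (hσ2 : ∀ j, j ≤ J → ∀ i, j ≤ i → i < σ j → Zf i < Cf i) :
    (∀ j (hj : j ≤ J), (Finset.Icc j J).sup' (Finset.nonempty_Icc.mpr hj) f = f (σ j)) ↔
    (∀ l, 1 ≤ l → l ≤ L →
      (∀ hne : (itvIoc J τ l ω).Nonempty, (itvIoc J τ l ω).sup' hne f = f (τ l ω).toNat) ∧
      (2 ≤ l → ∀ hne : (itvIcc J τ l ω).Nonempty,
        (itvIcc J τ l ω).sup' hne f = f (τ (l - 1) ω).toNat)) := by
  -- monotonicity of τ on [0, L]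
  have hmono' : ∀ a b, a ≤ b → b ≤ L → τ a ω ≤ τ b ω := by
    intro a b hab hbL
    induction b with
    | zero => have : a = 0 := by omega
              subst this; rfl
    | succ n ih =>
        rcases Nat.lt_or_ge a (n+1) with h | h
        · have h1 : τ n ω ≤ τ (n+1) ω := by
            have := hmono (n+1) (by omega) hbL
            simpa using this.le
          exact le_trans (ih (by omega) (by omega)) h1
        · have : a = n + 1 := by omega
          subst this; rfl
  have hneg : ∀ l, l ≤ L → (-1 : ℤ) ≤ τ l ω := by
    intro l hl
    rcases Nat.eq_zero_or_pos l with h | h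
    · subst h; rw [hτ0]
    · exact le_trans (by norm_num) (hrange l h hl).1
  -- existence of the block of `j`
  have hblock : ∀ j : ℕ, j ≤ J → ∃ l, 1 ≤ l ∧ l ≤ L ∧ τ (l - 1) ω < (j : ℤ) ∧ (j : ℤ) ≤ τ l ω := by
    intro j hj
    have hLmem : L ∈ (Finset.Icc 1 L).filter (fun l => (j : ℤ) ≤ τ l ω) := by
      simp only [Finset.mem_filter, Finset.mem_Icc]
      exact ⟨⟨hL1, le_rfl⟩, by rw [hτlast]; exact_mod_cast hj⟩
    set s := (Finset.Icc 1 L).filter (fun l => (j : ℤ) ≤ τ l ω) with hs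
    have hsne : s.Nonempty := ⟨L, hLmem⟩
    set l := s.min' hsne with hl
    have hlmem : l ∈ s := Finset.min'_mem s hsne
    simp only [hs, Finset.mem_filter, Finset.mem_Icc] at hlmem
    refine ⟨l, hlmem.1.1, hlmem.1.2, ?_, hlmem.2⟩
    rcases Nat.lt_or_ge 1 l with h2 | h2
    · -- 2 ≤ l : l - 1 not in s
      by_contra hcon
      push_neg at hcon
      have : l - 1 ∈ s := by
        simp only [hs, Finset.mem_filter, Finset.mem_Icc]
        exact ⟨⟨by omega, by omega⟩, hcon⟩
      have := Finset.min'_le s _ this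
      omega
    · have : l = 1 := by omega
      rw [this]; simp only [Nat.sub_self, hτ0]
      exact lt_of_lt_of_le (by norm_num) (Int.natCast_nonneg j)
  -- σ equals the right endpoint of the block
  have hσeq : ∀ l, 1 ≤ l → l ≤ L → ∀ j, j ≤ J → τ (l - 1) ω < (j : ℤ) → (j : ℤ) ≤ τ l ω →
      σ j = (τ l ω).toNat := by
    intro l hl1 hlL j hjJ hj1 hj2
    have h0 : (0 : ℤ) ≤ τ l ω := (hrange l hl1 hlL).1
    have htc : ((τ l ω).toNat : ℤ) = τ l ω := Int.toNat_of_nonneg h0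
    set t := (τ l ω).toNat with ht
    have hjt : j ≤ t := by
      rw [← htc] at hj2; exact_mod_cast hj2
    have htJ : t ≤ J := by
      have := (hrange l hl1 hlL).2
      rw [← htc] at this; exact_mod_cast this
    have h1 : σ j ≤ t := by
      by_contra hcon
      push_neg at hcon
      exact absurd (hstop l hl1 hlL) (not_le.mpr (hσ2 j hjJ t hjt hcon))
    have h2 : t ≤ σ j := by
      by_contra hcon
      push_neg at hcon
      have hi1 : τ (l - 1) ω < ((σ j : ℕ) : ℤ) :=
        lt_of_lt_of_le hj1 (by exact_mod_cast (hσ1 j hjJ).1)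
      have hi2 : ((σ j : ℕ) : ℤ) < τ l ω := by
        rw [← htc]; exact_mod_cast hcon
      exact absurd (hσ1 j hjJ).2.2 (not_le.mpr (hmin l hl1 hlL (σ j) hi1 hi2))
    omega
  constructor
  · -- P → Q
    intro hP l hl1 hlL
    have h0l : (0 : ℤ) ≤ τ l ω := (hrange l hl1 hlL).1
    have htc : ((τ l ω).toNat : ℤ) = τ l ω := Int.toNat_of_nonneg h0l
    have hτlJ : τ l ω ≤ (J : ℤ) := (hrange l hl1 hlL).2
    constructor
    · -- (i)
      intro hne
      have hpre : (-1 : ℤ) ≤ τ (l - 1) ω := hneg (l - 1) (by omega)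
      have h0j : (0 : ℤ) ≤ τ (l - 1) ω + 1 := by omega
      set j := (τ (l - 1) ω + 1).toNat with hjdef
      have hjc : (j : ℤ) = τ (l - 1) ω + 1 := Int.toNat_of_nonneg h0j
      have hj1 : τ (l - 1) ω < (j : ℤ) := by omega
      have hj2 : (j : ℤ) ≤ τ l ω := by
        have := hmono l hl1 hlL; omega
      have hjJ : j ≤ J := by
        have : (j : ℤ) ≤ (J : ℤ) := le_trans hj2 hτlJ
        exact_mod_cast this
      have hσj : σ j = (τ l ω).toNat := hσeq l hl1 hlL j hjJ hj1 hj2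
      have hsup := hP j hjJ
      rw [hσj] at hsup
      apply le_antisymm
      · apply Finset.sup'_le
        intro r hr
        rw [mem_itvIoc' hτlJ] at hr
        have hrmem : r ∈ Finset.Icc j J := by
          rw [Finset.mem_Icc]
          constructor
          · have : (j : ℤ) ≤ (r : ℤ) := by omega
            exact_mod_cast this
          · have : (r : ℤ) ≤ (J : ℤ) := le_trans hr.2 hτlJ
            exact_mod_cast this
        calc f r ≤ (Finset.Icc j J).sup' (Finset.nonempty_Icc.mpr hjJ) f :=
              Finset.le_sup' f hrmem
          _ = f (τ l ω).toNat := hsup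
      · apply Finset.le_sup'
        rw [mem_itvIoc' hτlJ, htc]
        exact ⟨hmono l hl1 hlL, le_rfl⟩
    · -- (ii)
      intro hl2 hne
      have hl1' : 1 ≤ l - 1 := by omega
      have hl1L : l - 1 ≤ L := by omega
      have h0j : (0 : ℤ) ≤ τ (l - 1) ω := (hrange (l - 1) hl1' hl1L).1
      set j := (τ (l - 1) ω).toNat with hjdef
      have hjc : (j : ℤ) = τ (l - 1) ω := Int.toNat_of_nonneg h0j
      have hjJ : j ≤ J := by
        have : (j : ℤ) ≤ (J : ℤ) := hjc ▸ (hrange (l - 1) hl1' hl1L).2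
        exact_mod_cast this
      have hj1 : τ (l - 1 - 1) ω < (j : ℤ) := by
        have := hmono (l - 1) hl1' hl1L; omega
      have hσj : σ j = (τ (l - 1) ω).toNat :=
        hσeq (l - 1) hl1' hl1L j hjJ hj1 (le_of_eq hjc)
      have hsup := hP j hjJ
      rw [hσj] at hsup
      apply le_antisymm
      · apply Finset.sup'_le
        intro r hr
        rw [mem_itvIcc' hτlJ] at hr
        have hrmem : r ∈ Finset.Icc j J := by
          rw [Finset.mem_Icc]
          constructor
          · have : (j : ℤ) ≤ (r : ℤ) := by omega
            exact_mod_cast this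
          · have : (r : ℤ) ≤ (J : ℤ) := le_trans hr.2 hτlJ
            exact_mod_cast this
        calc f r ≤ (Finset.Icc j J).sup' (Finset.nonempty_Icc.mpr hjJ) f :=
              Finset.le_sup' f hrmem
          _ = f (τ (l - 1) ω).toNat := hsup
      · apply Finset.le_sup'
        rw [mem_itvIcc' hτlJ, hjc]
        exact ⟨le_rfl, (hmono l hl1 hlL).le⟩
  · -- Q → P
    intro hQ j hjJ
    obtain ⟨l, hl1, hlL, hj1, hj2⟩ := hblock j hjJ
    have h0l : (0 : ℤ) ≤ τ l ω := (hrange l hl1 hlL).1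
    have htc : ((τ l ω).toNat : ℤ) = τ l ω := Int.toNat_of_nonneg h0l
    have hτlJ : τ l ω ≤ (J : ℤ) := (hrange l hl1 hlL).2
    have hσj : σ j = (τ l ω).toNat := hσeq l hl1 hlL j hjJ hj1 hj2
    rw [hσj]
    -- descending chain: f (τ m).toNat ≤ f (τ l).toNat for l ≤ m ≤ L
    have hchain : ∀ m, l ≤ m → m ≤ L → f (τ m ω).toNat ≤ f (τ l ω).toNat := by
      intro m hlm hmL
      induction m with
      | zero => have : l = 0 := by omega
                omega
      | succ n ih =>
          rcases Nat.lt_or_ge l (n + 1) with h | h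
          · have hn2 : 2 ≤ n + 1 := by omega
            have hn1 : 1 ≤ n + 1 := by omega
            have hτn1J : τ (n + 1) ω ≤ (J : ℤ) := (hrange (n + 1) hn1 hmL).2
            have h0n1 : (0 : ℤ) ≤ τ (n + 1) ω := (hrange (n + 1) hn1 hmL).1
            have htcn : ((τ (n + 1) ω).toNat : ℤ) = τ (n + 1) ω := Int.toNat_of_nonneg h0n1
            have hmem : (τ (n + 1) ω).toNat ∈ itvIcc J τ (n + 1) ω := by
              rw [mem_itvIcc' hτn1J, htcn]
              refine ⟨?_, le_rfl⟩
              simpa using hmono' n (n + 1) (by omega) hmL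
            have hne : (itvIcc J τ (n + 1) ω).Nonempty := ⟨_, hmem⟩
            have hii := (hQ (n + 1) hn1 hmL).2 hn2 hne
            have : f (τ (n + 1) ω).toNat ≤ f (τ ((n + 1) - 1) ω).toNat := by
              rw [← hii]; exact Finset.le_sup' f hmem
            simp only [Nat.add_sub_cancel] at this
            exact le_trans this (ih (by omega) (by omega))
          · have : l = n + 1 := by omega
            rw [this]
    apply le_antisymm
    · apply Finset.sup'_le
      intro r hr
      rw [Finset.mem_Icc] at hr
      obtain ⟨l', hl'1, hl'L, hr1, hr2⟩ := hblock r hr.2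
      -- l ≤ l'
      have hll' : l ≤ l' := by
        by_contra hcon
        push_neg at hcon
        have h1 : τ l' ω ≤ τ (l - 1) ω := hmono' l' (l - 1) (by omega) (by omega)
        have h2 : (j : ℤ) ≤ (r : ℤ) := by exact_mod_cast hr.1
        omega
      have hτl'J : τ l' ω ≤ (J : ℤ) := (hrange l' hl'1 hl'L).2
      have hmemr : r ∈ itvIoc J τ l' ω := by
        rw [mem_itvIoc' hτl'J]; exact ⟨hr1, hr2⟩
      have hne' : (itvIoc J τ l' ω).Nonempty := ⟨r, hmemr⟩
      have hi := (hQ l' hl'1 hl'L).1 hne'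
      have h3 : f r ≤ f (τ l' ω).toNat := by
        rw [← hi]; exact Finset.le_sup' f hmemr
      exact le_trans h3 (hchain l' hll' hl'L)
    · apply Finset.le_sup'
      rw [Finset.mem_Icc]
      constructor
      · have : (j : ℤ) ≤ ((τ l ω).toNat : ℤ) := by omega
        exact_mod_cast this
      · have : ((τ l ω).toNat : ℤ) ≤ (J : ℤ) := by omega
        exact_mod_cast this

lemma sup'_add_const {s : Finset ℕ} (hs : s.Nonempty) (f : ℕ → ℝ) (c : ℝ) :
    s.sup' hs (fun r => f r + c) = s.sup' hs f + c := by
  apply le_antisymm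
  · exact Finset.sup'_le _ _ fun r hr => add_le_add_left (Finset.le_sup' f hr) c
  · have : s.sup' hs f ≤ s.sup' hs (fun r => f r + c) - c :=
      Finset.sup'_le _ _ fun r hr => le_sub_iff_add_le.mpr (Finset.le_sup' (fun r => f r + c) hr)
    linarith

lemma integrable_sup' {Ω : Type*} [MeasurableSpace Ω] {μ : Measure Ω} {s : Finset ℕ}
    (hs : s.Nonempty) (f : ℕ → Ω → ℝ) (hf : ∀ i, Integrable (f i) μ) :
    Integrable (fun ω => s.sup' hs (fun i => f i ω)) μ := by
  induction hs using Finset.Nonempty.cons_induction with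
  | singleton a => simpa using hf a
  | cons a s h hs ih =>
      have : (fun ω => (Finset.cons a s h).sup' (Finset.cons_nonempty h) (fun i => f i ω))
          = fun ω => f a ω ⊔ s.sup' hs (fun i => f i ω) := by
        funext ω; exact Finset.sup'_cons hs _
      rw [this]
      exact (hf a).sup ih


/-- **Lemma 1: structural identities for `M^∘`.** A martingale `M` with `M 0 = 0` is weakly
optimal at every date `j = 0,…,J` if and only if, almost surely,
(i) `max_{τ^{l−1} < r ≤ τ^l} (Z r − M r) = Z (τ^l) − M (τ^l)` for every `l ≥ 1` and
(ii) `max_{τ^{l−1} ≤ r ≤ τ^l} (Z r − M r) = Z (τ^{l−1}) − M (τ^{l−1})` for every `l > 1`,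
where `τ^1 < τ^2 < ⋯ < τ^{l_J} = J` are the successive optimal exercise dates (`τ^0 := −1`,
`τ^l := inf{ i : τ^{l−1} < i ≤ J, Z i ≥ E[Y (i+1) | ℱ i] }`, with `Y (J+1) := 0`),
`L ω = l_J` being the final index. -/
theorem mem_weakly_optimal_iff_structural_identities
    {Ω : Type*} {mΩ : MeasurableSpace Ω} {μ : Measure Ω} [IsProbabilityMeasure μ]
    (J : ℕ) (ℱ : Filtration ℕ mΩ)
    (Z Y : ℕ → Ω → ℝ)
    (hZ_adapted : Adapted ℱ Z)
    (hZ_int : ∀ j, Integrable (Z j) μ)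
    (hYJ : ∀ ω, Y J ω = Z J ω)
    (hY : ∀ j, j < J → ∀ ω, Y j ω = max (Z j ω) ((μ[Y (j + 1) | ℱ j]) ω))
    -- the continuation value `C i = E[Y (i+1) | ℱ i]`, with the convention `Y (J+1) := 0`
    (C : ℕ → Ω → ℝ)
    (hC : ∀ i, i < J → C i = μ[Y (i + 1) | ℱ i])
    (hCJ : ∀ ω, C J ω = 0)
    -- the successive optimal exercise dates `τ^l`, `1 ≤ l ≤ L ω`, with `τ^0 = −1`
    (τ : ℕ → Ω → ℤ) (L : Ω → ℕ)
    (hτ0 : ∀ ω, τ 0 ω = -1)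
    (hL1 : ∀ ω, 1 ≤ L ω)
    (hτlast : ∀ ω, τ (L ω) ω = (J : ℤ))
    (hτmono : ∀ ω, ∀ l, 1 ≤ l → l ≤ L ω → τ (l - 1) ω < τ l ω)
    (hτrange : ∀ ω, ∀ l, 1 ≤ l → l ≤ L ω → 0 ≤ τ l ω ∧ τ l ω ≤ (J : ℤ))
    (hτstop : ∀ ω, ∀ l, 1 ≤ l → l ≤ L ω → C (τ l ω).toNat ω ≤ Z (τ l ω).toNat ω)
    (hτmin : ∀ ω, ∀ l, 1 ≤ l → l ≤ L ω →
      ∀ i : ℕ, τ (l - 1) ω < (i : ℤ) → (i : ℤ) < τ l ω → Z i ω < C i ω)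
    (M : ℕ → Ω → ℝ) :
    (Martingale M ℱ μ ∧ (∀ ω, M 0 ω = 0) ∧
      ∀ j, ∀ hj : j ≤ J,
        Y j =ᵐ[μ] μ[fun ω => (Finset.Icc j J).sup' (Finset.nonempty_Icc.mpr hj)
          (fun r => Z r ω - M r ω + M j ω) | ℱ j])
    ↔
    (Martingale M ℱ μ ∧ (∀ ω, M 0 ω = 0) ∧
      ∀ᵐ ω ∂μ, ∀ l, 1 ≤ l → l ≤ L ω →
        (∀ hne : (itvIoc J τ l ω).Nonempty,
          (itvIoc J τ l ω).sup' hne (fun r => Z r ω - M r ω)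
            = Z (τ l ω).toNat ω - M (τ l ω).toNat ω)
        ∧ (2 ≤ l → ∀ hne : (itvIcc J τ l ω).Nonempty,
          (itvIcc J τ l ω).sup' hne (fun r => Z r ω - M r ω)
            = Z (τ (l - 1) ω).toNat ω - M (τ (l - 1) ω).toNat ω)) := by
  classical
  have hCJZ : ∀ ω, C J ω ≤ Z J ω := by
    intro ω
    have h := hτstop ω (L ω) (hL1 ω) le_rfl
    rwa [hτlast ω, Int.toNat_natCast] at h
  have hex : ∀ (j : ℕ) (ω : Ω), ∃ i, (j ≤ i ∧ C i ω ≤ Z i ω) ∨ J ≤ i :=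
    fun j ω => ⟨max j J, Or.inr (le_max_right _ _)⟩
  set σ : ℕ → Ω → ℕ := fun j ω => Nat.find (hex j ω) with hσdef
  have hσle : ∀ j ω, σ j ω ≤ J := fun j ω => Nat.find_min' (hex j ω) (Or.inr le_rfl)
  have hσ1 : ∀ j, j ≤ J → ∀ ω, j ≤ σ j ω ∧ σ j ω ≤ J ∧ C (σ j ω) ω ≤ Z (σ j ω) ω := by
    intro j hj ω
    have hspec := Nat.find_spec (hex j ω)
    rcases hspec with ⟨h1, h2⟩ | h
    · exact ⟨h1, hσle j ω, h2⟩
    · have he : σ j ω = J := le_antisymm (hσle j ω) h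
      rw [he]
      exact ⟨hj, le_rfl, hCJZ ω⟩
  have hσ2 : ∀ j, j ≤ J → ∀ ω, ∀ i, j ≤ i → i < σ j ω → Z i ω < C i ω := by
    intro j _ ω i hji hi
    have h := Nat.find_min (hex j ω) hi
    push_neg at h
    exact h.1 hji
  have hσapp : ∀ (j : ℕ) (ω : Ω), σ j ω = Nat.find (hex j ω) := fun _ _ => rfl
  have hσrec : ∀ j, j < J → ∀ ω, σ j ω = if C j ω ≤ Z j ω then j else σ (j + 1) ω := by
    intro j hj ω
    by_cases h : C j ω ≤ Z j ω
    · rw [if_pos h, hσapp]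
      apply (Nat.find_eq_iff (hex j ω)).2
      refine ⟨Or.inl ⟨le_rfl, h⟩, fun n hn => ?_⟩
      rintro (⟨h1, _⟩ | h1) <;> omega
    · rw [if_neg h, hσapp, hσapp]
      apply le_antisymm
      · apply Nat.find_min' (hex j ω)
        have hspec := Nat.find_spec (hex (j + 1) ω)
        rcases hspec with ⟨h1, h2⟩ | h1
        · exact Or.inl ⟨by omega, h2⟩
        · exact Or.inr h1
      · apply Nat.find_min' (hex (j + 1) ω)
        have hspec := Nat.find_spec (hex j ω)
        rcases hspec with ⟨h1, h2⟩ | h1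
        · refine Or.inl ⟨?_, h2⟩
          rcases Nat.lt_or_ge j (Nat.find (hex j ω)) with h3 | h3
          · omega
          · have he : Nat.find (hex j ω) = j := le_antisymm h3 h1
            rw [he] at h2
            exact absurd h2 h
        · exact Or.inr h1
  have hCmeas : ∀ j, j ≤ J → StronglyMeasurable[ℱ j] (C j) := by
    intro j hj
    rcases lt_or_eq_of_le hj with h | h
    · rw [hC j h]; exact stronglyMeasurable_condExp
    · subst h
      have : C j = fun _ => 0 := funext hCJ
      rw [this]; exact stronglyMeasurable_const
  have hAmeas : ∀ j, j ≤ J → MeasurableSet[ℱ j] {ω | C j ω ≤ Z j ω} :=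
    fun j hj => measurableSet_le (hCmeas j hj).measurable (hZ_adapted j)
  have hYint : ∀ d j, j + d = J → Integrable (Y j) μ := by
    intro d
    induction d with
    | zero =>
        intro j hj
        have hjJ : j = J := by omega
        subst hjJ
        have : Y j = Z j := funext hYJ
        rw [this]; exact hZ_int j
    | succ n ih =>
        intro j hj
        have hjJ : j < J := by omega
        have heq : Y j = fun ω => max (Z j ω) ((μ[Y (j + 1)|ℱ j]) ω) := funext (hY j hjJ)
        rw [heq]
        have hsup : Integrable (Z j ⊔ μ[Y (j + 1)|ℱ j]) μ := (hZ_int j).sup integrable_condExp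
        exact hsup.congr (Filter.Eventually.of_forall fun ω => rfl)
  have key : Martingale M ℱ μ →
      ((∀ j, ∀ hj : j ≤ J,
        Y j =ᵐ[μ] μ[fun ω => (Finset.Icc j J).sup' (Finset.nonempty_Icc.mpr hj)
          (fun r => Z r ω - M r ω + M j ω) | ℱ j]) ↔
      (∀ᵐ ω ∂μ, ∀ l, 1 ≤ l → l ≤ L ω →
        (∀ hne : (itvIoc J τ l ω).Nonempty,
          (itvIoc J τ l ω).sup' hne (fun r => Z r ω - M r ω)
            = Z (τ l ω).toNat ω - M (τ l ω).toNat ω)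
        ∧ (2 ≤ l → ∀ hne : (itvIcc J τ l ω).Nonempty,
          (itvIcc J τ l ω).sup' hne (fun r => Z r ω - M r ω)
            = Z (τ (l - 1) ω).toNat ω - M (τ (l - 1) ω).toNat ω))) := by
    intro hM
    have hMint : ∀ i, Integrable (M i) μ := fun i => hM.integrable i
    set G : ℕ → Ω → ℝ := fun j ω => Z (σ j ω) ω - M (σ j ω) ω with hGdef
    have hGrec : ∀ j, j < J → G j =
        Set.indicator {ω' | C j ω' ≤ Z j ω'} (fun ω' => Z j ω' - M j ω')
        + Set.indicator {ω' | C j ω' ≤ Z j ω'}ᶜ (G (j + 1)) := by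
      intro j hj
      funext ω
      by_cases h : C j ω ≤ Z j ω
      · have hσj : σ j ω = j := by rw [hσrec j hj ω, if_pos h]
        have hmem : ω ∈ {ω' | C j ω' ≤ Z j ω'} := h
        simp only [Pi.add_apply, Set.indicator_of_mem hmem,
          Set.indicator_of_notMem (Set.notMem_compl_iff.mpr hmem), hGdef, hσj, add_zero]
      · have hσj : σ j ω = σ (j + 1) ω := by rw [hσrec j hj ω, if_neg h]
        have hmem : ω ∈ {ω' | C j ω' ≤ Z j ω'}ᶜ := h
        simp only [Pi.add_apply, Set.indicator_of_mem hmem,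
          Set.indicator_of_notMem (Set.notMem_compl_iff.mp (Set.not_notMem.mpr hmem)), hGdef,
          hσj, zero_add]
    have hGmain : ∀ d j, j + d = J →
        Integrable (G j) μ ∧ μ[G j|ℱ j] =ᵐ[μ] fun ω => Y j ω - M j ω := by
      intro d
      induction d with
      | zero =>
          intro j hj
          have hjJ : j = J := by omega
          subst hjJ
          have hGJ : G j = fun ω => Z j ω - M j ω := by
            funext ω
            have hσJ : σ j ω = j := le_antisymm (hσle j ω) (hσ1 j le_rfl ω).1
            simp only [hGdef, hσJ]
          rw [hGJ]
          refine ⟨(hZ_int j).sub (hMint j), ?_⟩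
          have hsm : StronglyMeasurable[ℱ j] (fun ω => Z j ω - M j ω) :=
            (Measurable.stronglyMeasurable (hZ_adapted j)).sub (hM.stronglyAdapted j)
          rw [condExp_of_stronglyMeasurable (ℱ.le j) hsm ((hZ_int j).sub (hMint j))]
          exact Filter.EventuallyEq.of_eq (funext fun ω => by rw [hYJ ω])
      | succ n ih =>
          intro j hj
          have hjJ : j < J := by omega
          obtain ⟨hint1, hcond1⟩ := ih (j + 1) (by omega)
          have hAj : MeasurableSet[ℱ j] {ω' | C j ω' ≤ Z j ω'} := hAmeas j hjJ.le
          have hAj0 : MeasurableSet {ω' | C j ω' ≤ Z j ω'} := ℱ.le j _ hAj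
          have hind1int :
              Integrable (Set.indicator {ω' | C j ω' ≤ Z j ω'} (fun ω => Z j ω - M j ω)) μ :=
            ((hZ_int j).sub (hMint j)).indicator hAj0
          have hind2int :
              Integrable (Set.indicator {ω' | C j ω' ≤ Z j ω'}ᶜ (G (j + 1))) μ :=
            hint1.indicator hAj0.compl
          have hGint : Integrable (G j) μ := by
            rw [hGrec j hjJ]; exact hind1int.add hind2int
          refine ⟨hGint, ?_⟩
          have hsplit : μ[G j|ℱ j] =ᵐ[μ]
              μ[Set.indicator {ω' | C j ω' ≤ Z j ω'} (fun ω => Z j ω - M j ω)|ℱ j]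
              + μ[Set.indicator {ω' | C j ω' ≤ Z j ω'}ᶜ (G (j + 1))|ℱ j] := by
            rw [hGrec j hjJ]
            exact condExp_add hind1int hind2int (ℱ j)
          have he1 : μ[Set.indicator {ω' | C j ω' ≤ Z j ω'} (fun ω => Z j ω - M j ω)|ℱ j]
              = Set.indicator {ω' | C j ω' ≤ Z j ω'} (fun ω => Z j ω - M j ω) :=
            condExp_of_stronglyMeasurable (ℱ.le j)
              (((Measurable.stronglyMeasurable (hZ_adapted j)).sub (hM.stronglyAdapted j)).indicator hAj) hind1int
          have he2 : μ[Set.indicator {ω' | C j ω' ≤ Z j ω'}ᶜ (G (j + 1))|ℱ j]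
              =ᵐ[μ] Set.indicator {ω' | C j ω' ≤ Z j ω'}ᶜ (μ[G (j + 1)|ℱ j]) :=
            condExp_indicator hint1 hAj.compl
          have he3 : μ[G (j + 1)|ℱ j] =ᵐ[μ] fun ω => C j ω - M j ω := by
            have t1 : μ[G (j + 1)|ℱ j] =ᵐ[μ] μ[μ[G (j + 1)|ℱ (j + 1)]|ℱ j] :=
              (condExp_condExp_of_le (ℱ.mono (Nat.le_succ j)) (ℱ.le (j + 1))).symm
            have t2 : μ[μ[G (j + 1)|ℱ (j + 1)]|ℱ j]
                =ᵐ[μ] μ[fun ω => Y (j + 1) ω - M (j + 1) ω|ℱ j] := condExp_congr_ae hcond1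
            have hYint1 : Integrable (Y (j + 1)) μ := hYint n (j + 1) (by omega)
            have t3 : μ[fun ω => Y (j + 1) ω - M (j + 1) ω|ℱ j]
                =ᵐ[μ] μ[Y (j + 1)|ℱ j] - μ[M (j + 1)|ℱ j] :=
              condExp_sub hYint1 (hMint (j + 1)) (ℱ j)
            have t4 : μ[M (j + 1)|ℱ j] =ᵐ[μ] M j := hM.condExp_ae_eq (Nat.le_succ j)
            have t5 : μ[Y (j + 1)|ℱ j] = C j := (hC j hjJ).symm
            filter_upwards [t1, t2, t3, t4] with ω k1 k2 k3 k4
            rw [k1, k2, k3]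
            simp only [Pi.sub_apply, t5, k4]
          rw [he1] at hsplit
          filter_upwards [hsplit, he2, he3] with ω k1 k2 k3
          have k1' : (μ[G j|ℱ j]) ω
              = Set.indicator {ω' | C j ω' ≤ Z j ω'} (fun ω => Z j ω - M j ω) ω
                + (μ[Set.indicator {ω' | C j ω' ≤ Z j ω'}ᶜ (G (j + 1))|ℱ j]) ω := k1
          rw [k1', k2, hY j hjJ ω, ← hC j hjJ]
          simp only [Set.indicator_apply, Set.mem_compl_iff, Set.mem_setOf_eq]
          by_cases hω : C j ω ≤ Z j ω
          · rw [if_pos hω, if_neg (not_not_intro hω), max_eq_left hω]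
            ring
          · rw [if_neg hω, if_pos hω, k3, max_eq_right (not_le.mp hω).le]
            ring
    have hstep : ∀ j (hj : j ≤ J),
        (Y j =ᵐ[μ] μ[fun ω => (Finset.Icc j J).sup' (Finset.nonempty_Icc.mpr hj)
            (fun r => Z r ω - M r ω + M j ω) | ℱ j]) ↔
        ((fun ω => (Finset.Icc j J).sup' (Finset.nonempty_Icc.mpr hj)
            (fun r => Z r ω - M r ω)) =ᵐ[μ] G j) := by
      intro j hj
      set S : Ω → ℝ := fun ω => (Finset.Icc j J).sup' (Finset.nonempty_Icc.mpr hj)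
          (fun r => Z r ω - M r ω) with hSdef
      have hSint : Integrable S μ :=
        integrable_sup' _ (fun r ω => Z r ω - M r ω) (fun i => (hZ_int i).sub (hMint i))
      have hfeq : (fun ω => (Finset.Icc j J).sup' (Finset.nonempty_Icc.mpr hj)
          (fun r => Z r ω - M r ω + M j ω)) = fun ω => S ω + M j ω :=
        funext fun ω => sup'_add_const _ _ _
      obtain ⟨hGint, hGcond⟩ := hGmain (J - j) j (by omega)
      have hc1 : μ[fun ω => S ω + M j ω|ℱ j] =ᵐ[μ] fun ω => (μ[S|ℱ j]) ω + M j ω := by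
        have h1 : μ[fun ω => S ω + M j ω|ℱ j] =ᵐ[μ] μ[S|ℱ j] + μ[M j|ℱ j] :=
          condExp_add hSint (hMint j) (ℱ j)
        have h2 : μ[M j|ℱ j] = M j :=
          condExp_of_stronglyMeasurable (ℱ.le j) (hM.stronglyAdapted j) (hMint j)
        rw [h2] at h1
        filter_upwards [h1] with ω h
        rw [h]; rfl
      have hpt : ∀ ω, G j ω ≤ S ω := by
        intro ω
        have hmem : σ j ω ∈ Finset.Icc j J := by
          rw [Finset.mem_Icc]; exact ⟨(hσ1 j hj ω).1, (hσ1 j hj ω).2.1⟩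
        exact Finset.le_sup' (fun r => Z r ω - M r ω) hmem
      constructor
      · intro h
        rw [hfeq] at h
        have hSc : μ[S|ℱ j] =ᵐ[μ] μ[G j|ℱ j] := by
          filter_upwards [h, hc1, hGcond] with ω h1 h2 h3
          rw [h3]
          have := h1.trans h2
          linarith
        have hd : Integrable (fun ω => S ω - G j ω) μ := hSint.sub hGint
        have hiz : ∫ ω, (S ω - G j ω) ∂μ = 0 := by
          rw [integral_sub hSint hGint]
          have e1 : ∫ ω, S ω ∂μ = ∫ ω, (μ[S|ℱ j]) ω ∂μ := (integral_condExp (ℱ.le j)).symm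
          have e2 : ∫ ω, G j ω ∂μ = ∫ ω, (μ[G j|ℱ j]) ω ∂μ := (integral_condExp (ℱ.le j)).symm
          rw [e1, e2, integral_congr_ae hSc, sub_self]
        have hz := (integral_eq_zero_iff_of_nonneg
          (fun ω => sub_nonneg.mpr (hpt ω)) hd).1 hiz
        filter_upwards [hz] with ω h0
        have h0' : S ω - G j ω = 0 := h0
        linarith
      · intro h
        rw [hfeq]
        have hSc : μ[S|ℱ j] =ᵐ[μ] μ[G j|ℱ j] := condExp_congr_ae h
        filter_upwards [hc1, hSc, hGcond] with ω h2 h3 h4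
        rw [h2, h3, h4]; ring
    constructor
    · intro hLHS
      have h1 : ∀ j : ℕ, ∀ᵐ ω ∂μ, ∀ hj : j ≤ J,
          (Finset.Icc j J).sup' (Finset.nonempty_Icc.mpr hj)
            (fun r => Z r ω - M r ω) = G j ω := by
        intro j
        by_cases hj : j ≤ J
        · filter_upwards [(hstep j hj).1 (hLHS j hj)] with ω h hj'
          exact h
        · filter_upwards with ω hj'
          exact absurd hj' hj
      have h2 := ae_all_iff.2 h1
      filter_upwards [h2] with ω hω
      exact (pathwise J τ ω (L ω) (fun r => Z r ω - M r ω) (fun i => Z i ω) (fun i => C i ω)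
        (fun j => σ j ω) (hτ0 ω) (hL1 ω) (hτlast ω) (hτmono ω) (hτrange ω) (hτstop ω)
        (hτmin ω) (fun j hj => hσ1 j hj ω) (fun j hj i a b => hσ2 j hj ω i a b)).1
        (fun j hj => hω j hj)
    · intro hRHS j hj
      apply (hstep j hj).2
      filter_upwards [hRHS] with ω hω
      exact (pathwise J τ ω (L ω) (fun r => Z r ω - M r ω) (fun i => Z i ω) (fun i => C i ω)
        (fun j => σ j ω) (hτ0 ω) (hL1 ω) (hτlast ω) (hτmono ω) (hτrange ω) (hτstop ω)
        (hτmin ω) (fun j hj => hσ1 j hj ω) (fun j hj i a b => hσ2 j hj ω i a b)).2 hω j hj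
  constructor
  · rintro ⟨hM, h0, h3⟩
    exact ⟨hM, h0, (key hM).1 h3⟩
  · rintro ⟨hM, h0, h3⟩
    exact ⟨hM, h0, (key hM).2 h3⟩
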